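/- If S₁, S₂ ∈ S̃ and S₁ ∩ S₂ = ∅, then μ*(S₁ ∪ S₂) = μ*(S₁) + μ*(S₂); that is, μ* is finitely additive on S̃. -/

import Mathlib

open scoped symmDiff ENNReal
open Filter Set Topology

/-- The outer measure induced by `μ : Ω → ℝ≥0∞`:
`μ*(E) = inf { ∑ᵢ μ(Aᵢ) : E ⊆ ⋃ᵢ Aᵢ, each Aᵢ ∈ Ω }`. -/
noncomputable def muStar {X : Type*} (Ω : Set (Set X)) (μ : Set X → ℝ≥0∞) (E : Set X) : ℝ≥0∞ :=
  ⨅ (A : ℕ → Set X) (_ : ∀ i, A i ∈ Ω) (_ : E ⊆ ⋃ i, A i), ∑' i, μ (A i)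

/-- `S̃ = { S ⊆ X : ∃ (Bₙ) in Ω with μ*(Bₙ △ S) → 0 }`. -/
def Stilde {X : Type*} (Ω : Set (Set X)) (μ : Set X → ℝ≥0∞) : Set (Set X) :=
  {S | ∃ B : ℕ → Set X, (∀ n, B n ∈ Ω) ∧
    Tendsto (fun n => muStar Ω μ (B n ∆ S)) atTop (𝓝 0)}

open MeasureTheory

section aux

variable {X : Type*} (Ω : Set (Set X)) (μ : Set X → ℝ≥0∞)

open Classical in
/-- Extension of `μ` by `⊤` off `Ω`. -/
noncomputable def mExt : Set X → ℝ≥0∞ := fun A => if A ∈ Ω then μ A else ⊤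

lemma mExt_empty (hΩempty : ∅ ∈ Ω) (hμempty : μ ∅ = 0) : mExt Ω μ ∅ = 0 := by
  simp [mExt, hΩempty, hμempty]

lemma muStar_le_tsum {A : ℕ → Set X} (hA : ∀ i, A i ∈ Ω) {E : Set X}
    (hE : E ⊆ ⋃ i, A i) : muStar Ω μ E ≤ ∑' i, μ (A i) :=
  iInf_le_of_le A (iInf_le_of_le hA (iInf_le_of_le hE le_rfl))

lemma muStar_mono {E F : Set X} (h : E ⊆ F) : muStar Ω μ E ≤ muStar Ω μ F := by
  refine le_iInf fun A => le_iInf fun hA => le_iInf fun hF => ?_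
  exact muStar_le_tsum Ω μ hA (h.trans hF)

/-- `muStar` agrees with the outer measure generated by the extension of `μ` by `⊤`. -/
lemma muStar_eq_ofFunction (hΩempty : ∅ ∈ Ω) (hμempty : μ ∅ = 0) (E : Set X) :
    muStar Ω μ E = MeasureTheory.OuterMeasure.ofFunction (mExt Ω μ)
      (mExt_empty Ω μ hΩempty hμempty) E := by
  apply le_antisymm
  · refine le_iInf fun A => le_iInf fun hE => ?_
    by_cases hA : ∀ i, A i ∈ Ω
    · refine (muStar_le_tsum Ω μ hA hE).trans ?_
      exact ENNReal.tsum_le_tsum fun i => by simp [mExt, hA i]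
    · push_neg at hA
      obtain ⟨i, hi⟩ := hA
      refine le_trans ?_ (ENNReal.le_tsum i)
      simp [mExt, hi]
  · refine le_iInf fun A => le_iInf fun hA => le_iInf fun hE => ?_
    calc MeasureTheory.OuterMeasure.ofFunction (mExt Ω μ) (mExt_empty Ω μ hΩempty hμempty) E
        ≤ _ := measure_mono hE
      _ ≤ ∑' i, MeasureTheory.OuterMeasure.ofFunction (mExt Ω μ)
            (mExt_empty Ω μ hΩempty hμempty) (A i) := measure_iUnion_le _
      _ ≤ ∑' i, μ (A i) := ENNReal.tsum_le_tsum fun i => by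
          simpa [mExt, hA i] using
            MeasureTheory.OuterMeasure.ofFunction_le (m := mExt Ω μ)
              (m_empty := mExt_empty Ω μ hΩempty hμempty) (A i)

lemma muStar_union_le (hΩempty : ∅ ∈ Ω) (hμempty : μ ∅ = 0) (E F : Set X) :
    muStar Ω μ (E ∪ F) ≤ muStar Ω μ E + muStar Ω μ F := by
  simp only [muStar_eq_ofFunction Ω μ hΩempty hμempty]
  exact measure_union_le E F

variable (hΩempty : ∅ ∈ Ω) (hΩuniv : Set.univ ∈ Ω)
    (hΩcompl : ∀ A ∈ Ω, Aᶜ ∈ Ω) (hΩunion : ∀ A ∈ Ω, ∀ B ∈ Ω, A ∪ B ∈ Ω)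
    (hμempty : μ ∅ = 0)
    (hμadd : ∀ A : ℕ → Set X, (∀ i, A i ∈ Ω) → Pairwise (Function.onFun Disjoint A) →
      (⋃ i, A i) ∈ Ω → μ (⋃ i, A i) = ∑' i, μ (A i))

include hΩcompl hΩunion

lemma omega_inter {A B : Set X} (hA : A ∈ Ω) (hB : B ∈ Ω) : A ∩ B ∈ Ω := by
  have : A ∩ B = (Aᶜ ∪ Bᶜ)ᶜ := by simp [Set.compl_union]
  rw [this]
  exact hΩcompl _ (hΩunion _ (hΩcompl _ hA) _ (hΩcompl _ hB))

lemma omega_diff {A B : Set X} (hA : A ∈ Ω) (hB : B ∈ Ω) : A \ B ∈ Ω := by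
  rw [Set.diff_eq]
  exact omega_inter Ω hΩcompl hΩunion hA (hΩcompl _ hB)

include hΩempty hμempty hμadd

/-- Binary additivity of the premeasure. -/
lemma premeasure_union {A B : Set X} (hA : A ∈ Ω) (hB : B ∈ Ω) (h : Disjoint A B) :
    μ (A ∪ B) = μ A + μ B := by
  classical
  set f : ℕ → Set X := fun n => if n = 0 then A else if n = 1 then B else ∅ with hf
  have hUn : ⋃ i, f i = A ∪ B := by
    apply Set.Subset.antisymm
    · refine Set.iUnion_subset fun i => ?_
      rcases i with _ | _ | i <;> simp [hf]
    · refine Set.union_subset ?_ ?_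
      · exact le_trans (by simp [hf]) (Set.subset_iUnion f 0)
      · exact le_trans (by simp [hf]) (Set.subset_iUnion f 1)
  have hfi : ∀ i, f i ∈ Ω := by
    intro i; rcases i with _ | _ | i <;> simpa [hf]
  have hpd : Pairwise (Function.onFun Disjoint f) := by
    intro i j hij
    simp only [Function.onFun, hf]
    rcases i with _ | _ | i <;> rcases j with _ | _ | j <;>
      simp_all [h, h.symm, Set.empty_disjoint, Set.disjoint_empty]
  have := hμadd f hfi hpd (hUn ▸ hΩunion _ hA _ hB)
  rw [hUn] at this
  rw [this]
  have : ∑' i, μ (f i) = ∑ i ∈ Finset.range 2, μ (f i) := by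
    refine tsum_eq_sum fun i hi => ?_
    rcases i with _ | _ | i <;> simp [hf, hμempty] <;> simp_all
  rw [this]
  simp [hf, Finset.sum_range_succ]

lemma premeasure_mono {A B : Set X} (hA : A ∈ Ω) (hB : B ∈ Ω) (h : A ⊆ B) :
    μ A ≤ μ B := by
  have hd : B = A ∪ (B \ A) := by rw [Set.union_diff_cancel h]
  have := premeasure_union Ω μ hΩempty hΩcompl hΩunion hμempty hμadd hA
    (omega_diff Ω hΩcompl hΩunion hB hA) (Set.disjoint_sdiff_right)
  rw [← hd] at this
  rw [this]; exact le_self_add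

/-- `μ* = μ` on `Ω`. -/
lemma muStar_eq_premeasure {B : Set X} (hB : B ∈ Ω) : muStar Ω μ B = μ B := by
  classical
  apply le_antisymm
  · set f : ℕ → Set X := fun n => if n = 0 then B else ∅ with hf
    have hfi : ∀ i, f i ∈ Ω := fun i => by rcases i with _ | i <;> simpa [hf]
    have hcov : B ⊆ ⋃ i, f i := le_trans (by simp [hf]) (Set.subset_iUnion f 0)
    refine (muStar_le_tsum Ω μ hfi hcov).trans ?_
    have : ∑' i, μ (f i) = μ (f 0) := by
      refine tsum_eq_single 0 fun i hi => ?_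
      rcases i with _ | i <;> simp [hf, hμempty] <;> simp_all
    rw [this]; simp [hf]
  · refine le_iInf fun A => le_iInf fun hA => le_iInf fun hcov => ?_
    -- disjointify
    set D : ℕ → Set X := disjointed (fun i => A i ∩ B) with hD
    have hDsub : ∀ i, D i ⊆ A i ∩ B := fun i => disjointed_le (fun i => A i ∩ B) i
    have hDΩ : ∀ i, D i ∈ Ω := by
      intro i
      induction i using Nat.strong_induction_on with
      | _ i ih =>
        rcases i with _ | i
        · simpa [hD, disjointed_zero] using omega_inter Ω hΩcompl hΩunion (hA 0) hB
        · rw [hD, disjointed_add_one]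
          have hps : ∀ n, (partialSups (fun i => A i ∩ B) n : Set X) ∈ Ω := by
            intro n
            induction n with
            | zero => simpa using omega_inter Ω hΩcompl hΩunion (hA 0) hB
            | succ n ihn =>
              rw [partialSups_add_one]
              exact hΩunion _ ihn _ (omega_inter Ω hΩcompl hΩunion (hA (n+1)) hB)
          exact omega_diff Ω hΩcompl hΩunion
            (omega_inter Ω hΩcompl hΩunion (hA (i+1)) hB) (hps i)
    have hDun : ⋃ i, D i = B := by
      rw [hD, iUnion_disjointed, ← Set.iUnion_inter, Set.inter_eq_right.2 hcov]
    have := hμadd D hDΩ (disjoint_disjointed _) (hDun ▸ hB)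
    rw [hDun] at this
    rw [this]
    refine ENNReal.tsum_le_tsum fun i => ?_
    exact premeasure_mono Ω μ hΩempty hΩcompl hΩunion hμempty hμadd (hDΩ i) (hA i)
      ((hDsub i).trans Set.inter_subset_left)

end aux

/-- If `S₁, S₂ ∈ S̃` are disjoint, then `μ*(S₁ ∪ S₂) = μ*(S₁) + μ*(S₂)`. -/
theorem stmt_10 {X : Type*} (Ω : Set (Set X)) (μ : Set X → ℝ≥0∞)
    (hΩempty : ∅ ∈ Ω) (hΩuniv : Set.univ ∈ Ω)
    (hΩcompl : ∀ A ∈ Ω, Aᶜ ∈ Ω) (hΩunion : ∀ A ∈ Ω, ∀ B ∈ Ω, A ∪ B ∈ Ω)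
    (hμempty : μ ∅ = 0) (hμfin : μ Set.univ < ⊤)
    (hμadd : ∀ A : ℕ → Set X, (∀ i, A i ∈ Ω) → Pairwise (Function.onFun Disjoint A) →
      (⋃ i, A i) ∈ Ω → μ (⋃ i, A i) = ∑' i, μ (A i))
    (S₁ S₂ : Set X) (hS₁ : S₁ ∈ Stilde Ω μ) (hS₂ : S₂ ∈ Stilde Ω μ)
    (hdisj : S₁ ∩ S₂ = ∅) :
    muStar Ω μ (S₁ ∪ S₂) = muStar Ω μ S₁ + muStar Ω μ S₂ := by

  obtain ⟨B, hBΩ, hB⟩ := hS₁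
  obtain ⟨C, hCΩ, hC⟩ := hS₂
  have hinter : ∀ {A B : Set X}, A ∈ Ω → B ∈ Ω → A ∩ B ∈ Ω := fun hA hB =>
    omega_inter Ω hΩcompl hΩunion hA hB
  have hmeq : ∀ {A : Set X}, A ∈ Ω → muStar Ω μ A = μ A := fun hA =>
    muStar_eq_premeasure Ω μ hΩempty hΩcompl hΩunion hμempty hμadd hA
  have hadd2 : ∀ {A B : Set X}, A ∈ Ω → B ∈ Ω → Disjoint A B → μ (A ∪ B) = μ A + μ B :=
    fun hA hB h => premeasure_union Ω μ hΩempty hΩcompl hΩunion hμempty hμadd hA hB h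
  set e : ℕ → ℝ≥0∞ := fun n => muStar Ω μ (B n ∆ S₁) + muStar Ω μ (C n ∆ S₂) with he
  refine le_antisymm (muStar_union_le Ω μ hΩempty hμempty S₁ S₂) ?_
  -- it suffices to show the bound with 3 * e n added, for all n
  have key : ∀ n, muStar Ω μ S₁ + muStar Ω μ S₂ ≤ muStar Ω μ (S₁ ∪ S₂) + 3 * e n := by
    intro n
    -- basic symmDiff containments
    have h1 : S₁ ⊆ B n ∪ (B n ∆ S₁) := by
      intro x hx
      by_cases hxB : x ∈ B n
      · exact Or.inl hxB
      · exact Or.inr (Or.inr ⟨hx, hxB⟩)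
    have h2 : S₂ ⊆ C n ∪ (C n ∆ S₂) := by
      intro x hx
      by_cases hxC : x ∈ C n
      · exact Or.inl hxC
      · exact Or.inr (Or.inr ⟨hx, hxC⟩)
    have h3 : (B n ∪ C n) ⊆ (S₁ ∪ S₂) ∪ ((B n ∆ S₁) ∪ (C n ∆ S₂)) := by
      rintro x (hx | hx)
      · by_cases hxS : x ∈ S₁
        · exact Or.inl (Or.inl hxS)
        · exact Or.inr (Or.inl (Or.inl ⟨hx, hxS⟩))
      · by_cases hxS : x ∈ S₂
        · exact Or.inl (Or.inr hxS)
        · exact Or.inr (Or.inr (Or.inl ⟨hx, hxS⟩))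
    have h4 : (B n ∩ C n) ⊆ (B n ∆ S₁) ∪ (C n ∆ S₂) := by
      rintro x ⟨hxB, hxC⟩
      by_cases hxS : x ∈ S₁
      · have hxS2 : x ∉ S₂ := fun h => by
          have : x ∈ S₁ ∩ S₂ := ⟨hxS, h⟩
          simp [hdisj] at this
        exact Or.inr (Or.inl ⟨hxC, hxS2⟩)
      · exact Or.inl (Or.inl ⟨hxB, hxS⟩)
    -- step 1: μ* S₁ + μ* S₂ ≤ μ(Bₙ) + μ(Cₙ) + e n
    have step1 : muStar Ω μ S₁ + muStar Ω μ S₂ ≤ μ (B n) + μ (C n) + e n := by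
      have b1 : muStar Ω μ S₁ ≤ μ (B n) + muStar Ω μ (B n ∆ S₁) := by
        refine le_trans (muStar_mono Ω μ h1) ?_
        refine le_trans (muStar_union_le Ω μ hΩempty hμempty _ _) ?_
        rw [hmeq (hBΩ n)]
      have b2 : muStar Ω μ S₂ ≤ μ (C n) + muStar Ω μ (C n ∆ S₂) := by
        refine le_trans (muStar_mono Ω μ h2) ?_
        refine le_trans (muStar_union_le Ω μ hΩempty hμempty _ _) ?_
        rw [hmeq (hCΩ n)]
      calc muStar Ω μ S₁ + muStar Ω μ S₂
          ≤ (μ (B n) + muStar Ω μ (B n ∆ S₁)) + (μ (C n) + muStar Ω μ (C n ∆ S₂)) :=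
            add_le_add b1 b2
        _ = μ (B n) + μ (C n) + e n := by rw [he]; ring
    -- step 2: μ(Bₙ) + μ(Cₙ) = μ(Bₙ ∪ Cₙ) + μ(Bₙ ∩ Cₙ)
    have step2 : μ (B n) + μ (C n) = μ (B n ∪ C n) + μ (B n ∩ C n) := by
      have e1 : μ (B n) = μ (B n \ C n) + μ (B n ∩ C n) := by
        have := hadd2 (omega_diff Ω hΩcompl hΩunion (hBΩ n) (hCΩ n))
          (hinter (hBΩ n) (hCΩ n)) (Set.disjoint_sdiff_left.mono_right Set.inter_subset_right)
        rwa [Set.diff_union_inter] at this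
      have e2 : μ (B n ∪ C n) = μ (B n \ C n) + μ (C n) := by
        have := hadd2 (omega_diff Ω hΩcompl hΩunion (hBΩ n) (hCΩ n)) (hCΩ n)
          Set.disjoint_sdiff_left
        rwa [Set.diff_union_self] at this
      rw [e1, e2]; ring
    -- step 3: μ(Bₙ ∪ Cₙ) ≤ μ*(S₁ ∪ S₂) + e n
    have step3 : μ (B n ∪ C n) ≤ muStar Ω μ (S₁ ∪ S₂) + e n := by
      rw [← hmeq (hΩunion _ (hBΩ n) _ (hCΩ n))]
      refine le_trans (muStar_mono Ω μ h3) ?_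
      refine le_trans (muStar_union_le Ω μ hΩempty hμempty _ _) ?_
      exact add_le_add_right (le_trans (muStar_union_le Ω μ hΩempty hμempty _ _) le_rfl) _
    -- step 4: μ(Bₙ ∩ Cₙ) ≤ e n
    have step4 : μ (B n ∩ C n) ≤ e n := by
      rw [← hmeq (hinter (hBΩ n) (hCΩ n))]
      refine le_trans (muStar_mono Ω μ h4) ?_
      exact muStar_union_le Ω μ hΩempty hμempty _ _
    calc muStar Ω μ S₁ + muStar Ω μ S₂
        ≤ μ (B n) + μ (C n) + e n := step1
      _ = μ (B n ∪ C n) + μ (B n ∩ C n) + e n := by rw [step2]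
      _ ≤ (muStar Ω μ (S₁ ∪ S₂) + e n) + e n + e n := by
          gcongr
      _ = muStar Ω μ (S₁ ∪ S₂) + 3 * e n := by ring
  -- pass to the limit
  have hlim : Tendsto (fun n => muStar Ω μ (S₁ ∪ S₂) + 3 * e n) atTop
      (𝓝 (muStar Ω μ (S₁ ∪ S₂))) := by
    have he0 : Tendsto e atTop (𝓝 0) := by
      simpa using hB.add hC
    have h3e : Tendsto (fun n => (3 : ℝ≥0∞) * e n) atTop (𝓝 0) := by
      simpa using ENNReal.Tendsto.const_mul he0 (Or.inr (by norm_num))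
    simpa using (tendsto_const_nhds (x := muStar Ω μ (S₁ ∪ S₂))).add h3e
  exact ge_of_tendsto' hlim key
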